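/- There exists a configuration of three points on the real line, a PDD-like influence function f, and a sequence of weight functions w^{(t)} (changing over iterations) such that the blurring mean-shift process with time-varying weights does not converge: in particular one point's iterates alternate in sign with absolute value bounded away from zero. -/

import Mathlib

open Filter

noncomputable section BlurAux

def bet (t : ℕ) : ℝ := (1/8) * (1/2)^t
def bb (t : ℕ) : ℝ := 1/2 + bet t
def aa : ℕ → ℝ
  | 0 => 1/8
  | t+1 => -aa t / (1 + 3 * bet t)
def vv (t : ℕ) : ℝ := (bb (t+1) - aa t) / bet t
def zz (t : ℕ) : ℝ := (aa t + bb (t+1)) / bet t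
def ff (d : ℝ) : ℝ := if d = 0 then 1 else if d < 1 then 1/2 else 0
def ww (t : ℕ) (y : ℝ) : ℝ := if y = bb t then vv t else if y = -(bb t) then zz t else 1
def xx (t : ℕ) : Fin 3 → ℝ := ![aa t, bb t, -(bb t)]

lemma bet_pos (t : ℕ) : 0 < bet t := by
  unfold bet; positivity

lemma bet_le (t : ℕ) : bet t ≤ 1/8 := by
  unfold bet
  have : (1/2:ℝ)^t ≤ 1 := pow_le_one₀ (by norm_num) (by norm_num)
  nlinarith

lemma bet_succ (t : ℕ) : bet (t+1) = bet t / 2 := by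
  unfold bet; rw [pow_succ]; ring

lemma bb_lb (t : ℕ) : 1/2 < bb t := by
  have := bet_pos t; unfold bb; linarith

lemma bb_ub (t : ℕ) : bb t ≤ 5/8 := by
  have := bet_le t; unfold bb; linarith

lemma aa_key (t : ℕ) : 1/24 * (1 + 2*(1/2)^t) ≤ |aa t| ∧ |aa t| ≤ 1/8 ∧ (0 < aa t ↔ Even t) := by
  induction t with
  | zero =>
    have : |aa 0| = 1/8 := by
      show |(1/8:ℝ)| = 1/8
      rw [abs_of_pos]; norm_num
    rw [this]
    norm_num [aa]
  | succ t ih =>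
    obtain ⟨h1, h2, h3⟩ := ih
    have hb := bet_pos t
    have hbl := bet_le t
    have hd : (0:ℝ) < 1 + 3 * bet t := by linarith
    have habs : |aa (t+1)| = |aa t| / (1 + 3 * bet t) := by
      show |-aa t / (1 + 3 * bet t)| = _
      rw [abs_div, abs_neg, abs_of_pos hd]
    have hq : (0:ℝ) < (1/2:ℝ)^t := by positivity
    have hq1 : (1/2:ℝ)^t ≤ 1 := pow_le_one₀ (by norm_num) (by norm_num)
    refine ⟨?_, ?_, ?_⟩
    · rw [habs, le_div_iff₀ hd]
      have : bet t = (1/8) * (1/2)^t := rfl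
      rw [pow_succ]
      nlinarith
    · rw [habs, div_le_iff₀ hd]; nlinarith
    · have hne : aa t ≠ 0 := by
        intro h; rw [h, abs_zero] at h1; nlinarith
      show 0 < -aa t / (1 + 3 * bet t) ↔ _
      rw [div_pos_iff]
      rw [Nat.even_add_one]
      constructor
      · rintro (⟨h, _⟩ | ⟨_, h⟩)
        · intro he; have := h3.mpr he; linarith
        · linarith
      · intro h
        left
        constructor
        · rcases lt_trichotomy (aa t) 0 with hlt | he | hgt
          · linarith
          · exact absurd he hne
          · exact absurd (h3.mp hgt) h
        · linarith

lemma aa_abs_le (t : ℕ) : |aa t| ≤ 1/8 := (aa_key t).2.1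

lemma aa_abs_ge (t : ℕ) : 1/24 ≤ |aa t| := by
  have := (aa_key t).1
  have : (0:ℝ) < (1/2:ℝ)^t := by positivity
  nlinarith [(aa_key t).1]

lemma vv_pos (t : ℕ) : 0 < vv t := by
  unfold vv
  have h1 := bet_pos t
  have h2 : 1/2 < bb (t+1) := bb_lb (t+1)
  have h3 := abs_le.mp (aa_abs_le t)
  apply div_pos (by linarith [h3.2]) h1

lemma zz_pos (t : ℕ) : 0 < zz t := by
  unfold zz
  have h1 := bet_pos t
  have h2 : 1/2 < bb (t+1) := bb_lb (t+1)
  have h3 := abs_le.mp (aa_abs_le t)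
  apply div_pos (by linarith [h3.1]) h1

lemma ww_pos (t : ℕ) (y : ℝ) : 0 < ww t y := by
  unfold ww
  split
  · exact vv_pos t
  · split
    · exact zz_pos t
    · norm_num


lemma ff_mid {d : ℝ} (h1 : 0 < d) (h2 : d < 1) : ff d = 1/2 := by
  unfold ff; rw [if_neg h1.ne', if_pos h2]

lemma ff_big {d : ℝ} (h : 1 < d) : ff d = 0 := by
  unfold ff; rw [if_neg (by linarith), if_neg (by push_neg; linarith)]

lemma aa_lt_bb (t : ℕ) : aa t < bb t := by
  have := abs_le.mp (aa_abs_le t); have := bb_lb t; linarith [this]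

lemma neg_bb_lt_aa (t : ℕ) : -(bb t) < aa t := by
  have h := abs_le.mp (aa_abs_le t); have := bb_lb t; linarith [h.1]

lemma ww_a (t : ℕ) : ww t (aa t) = 1 := by
  unfold ww
  rw [if_neg (ne_of_lt (aa_lt_bb t)), if_neg (ne_of_gt (neg_bb_lt_aa t))]

lemma ww_b (t : ℕ) : ww t (bb t) = vv t := by
  unfold ww; rw [if_pos rfl]

lemma ww_c (t : ℕ) : ww t (-(bb t)) = zz t := by
  unfold ww
  have : -(bb t) ≠ bb t := by have := bb_lb t; intro h; linarith
  rw [if_neg this, if_pos rfl]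

lemma update_facts (t : ℕ) :
    ff |aa t - aa t| = 1 ∧ ff |bb t - aa t| = 1/2 ∧ ff |-(bb t) - aa t| = 1/2 ∧
    ff |aa t - bb t| = 1/2 ∧ ff |bb t - bb t| = 1 ∧ ff |-(bb t) - bb t| = 0 ∧
    ff |aa t - -(bb t)| = 1/2 ∧ ff |bb t - -(bb t)| = 0 ∧ ff |-(bb t) - -(bb t)| = 1 := by
  have ha := abs_le.mp (aa_abs_le t)
  have hb1 := bb_lb t
  have hb2 := bb_ub t
  have h2 : ff |bb t - aa t| = 1/2 := by
    rw [abs_of_pos (by linarith [ha.2])]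
    exact ff_mid (by linarith [ha.2]) (by linarith [ha.1])
  have h3 : ff |-(bb t) - aa t| = 1/2 := by
    rw [abs_of_neg (by linarith [ha.1])]
    exact ff_mid (by linarith [ha.1]) (by linarith [ha.2])
  have h6 : ff |-(bb t) - bb t| = 0 := by
    rw [abs_of_neg (by linarith)]; exact ff_big (by linarith)
  refine ⟨by simp [ff], h2, h3, by rw [abs_sub_comm]; exact h2, by simp [ff], h6,
    by rw [abs_sub_comm]; exact h3, by rw [abs_sub_comm]; exact h6, by simp [ff]⟩

lemma misc_facts (t : ℕ) :
    vv t = (1/2 + bet t/2 - aa t) / bet t ∧ zz t = (aa t + (1/2 + bet t/2)) / bet t ∧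
    bb t = 1/2 + bet t ∧ aa (t+1) = -aa t / (1 + 3 * bet t) ∧ bb (t+1) = 1/2 + bet t/2 := by
  refine ⟨?_, ?_, rfl, rfl, ?_⟩
  · unfold vv bb; rw [bet_succ]
  · unfold zz bb; rw [bet_succ]
  · unfold bb; rw [bet_succ]

lemma update0 (t : ℕ) : xx (t+1) 0 =
    (∑ k, ff |xx t k - xx t 0| * ww t (xx t k))⁻¹ *
      ∑ j, ff |xx t j - xx t 0| * ww t (xx t j) * xx t j := by
  obtain ⟨h1, h2, h3, h4, h5, h6, h7, h8, h9⟩ := update_facts t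
  obtain ⟨hv, hz, hbb, haa, hbb'⟩ := misc_facts t
  have hβ' : bet t ≠ 0 := ne_of_gt (bet_pos t)
  have h13 : (1:ℝ) + 3 * bet t ≠ 0 :=
    ne_of_gt (by linarith [bet_pos t])
  have hvp := vv_pos t
  have hzp := zz_pos t
  simp only [xx, Fin.sum_univ_three, Matrix.cons_val_zero, Matrix.cons_val_one,
    Matrix.head_cons, Matrix.cons_val_two, Matrix.tail_cons]
  rw [h1, h2, h3, ww_a, ww_b, ww_c]
  have hD : (1 * 1 + 1/2 * vv t + 1/2 * zz t) ≠ 0 := by positivity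
  rw [haa, inv_mul_eq_div, eq_div_iff hD, hv, hz, hbb]
  field_simp
  ring

lemma update1 (t : ℕ) : xx (t+1) 1 =
    (∑ k, ff |xx t k - xx t 1| * ww t (xx t k))⁻¹ *
      ∑ j, ff |xx t j - xx t 1| * ww t (xx t j) * xx t j := by
  obtain ⟨h1, h2, h3, h4, h5, h6, h7, h8, h9⟩ := update_facts t
  obtain ⟨hv, hz, hbb, haa, hbb'⟩ := misc_facts t
  have hβ' : bet t ≠ 0 := ne_of_gt (bet_pos t)
  have hvp := vv_pos t
  have hzp := zz_pos t
  simp only [xx, Fin.sum_univ_three, Matrix.cons_val_zero, Matrix.cons_val_one,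
    Matrix.head_cons, Matrix.cons_val_two, Matrix.tail_cons]
  rw [h4, h5, h6, ww_a, ww_b, ww_c]
  have hD : (1/2 * 1 + 1 * vv t + 0 * zz t) ≠ 0 := by positivity
  rw [hbb', inv_mul_eq_div, eq_div_iff hD, hv, hz, hbb]
  field_simp
  ring

lemma update2 (t : ℕ) : xx (t+1) 2 =
    (∑ k, ff |xx t k - xx t 2| * ww t (xx t k))⁻¹ *
      ∑ j, ff |xx t j - xx t 2| * ww t (xx t j) * xx t j := by
  obtain ⟨h1, h2, h3, h4, h5, h6, h7, h8, h9⟩ := update_facts t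
  obtain ⟨hv, hz, hbb, haa, hbb'⟩ := misc_facts t
  have hβ' : bet t ≠ 0 := ne_of_gt (bet_pos t)
  have hvp := vv_pos t
  have hzp := zz_pos t
  simp only [xx, Fin.sum_univ_three, Matrix.cons_val_zero, Matrix.cons_val_one,
    Matrix.head_cons, Matrix.cons_val_two, Matrix.tail_cons]
  rw [h7, h8, h9, ww_a, ww_b, ww_c]
  have hD : (1/2 * 1 + 0 * vv t + 1 * zz t) ≠ 0 := by positivity
  rw [hbb', inv_mul_eq_div, eq_div_iff hD, hv, hz, hbb]
  field_simp
  ring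

lemma update (t : ℕ) (i : Fin 3) : xx (t+1) i =
    (∑ k, ff |xx t k - xx t i| * ww t (xx t k))⁻¹ *
      ∑ j, ff |xx t j - xx t i| * ww t (xx t j) * xx t j := by
  fin_cases i
  · exact update0 t
  · exact update1 t
  · exact update2 t

lemma gap (t : ℕ) : 1/12 ≤ |aa (t+1) - aa t| := by
  obtain ⟨hg, hle, hiff⟩ := aa_key t
  obtain ⟨hg', hle', hiff'⟩ := aa_key (t+1)
  have hq : (0:ℝ) < (1/2:ℝ)^t := by positivity
  have hq' : (0:ℝ) < (1/2:ℝ)^(t+1) := by positivity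
  have hg2 : 1/24 ≤ |aa t| := by nlinarith
  have hg2' : 1/24 ≤ |aa (t+1)| := by nlinarith
  have hodd : ¬ (Even (t+1) ↔ Even t) := by
    rw [Nat.even_add_one]; tauto
  by_cases he : Even t
  · have hp : 0 < aa t := hiff.mpr he
    have hn : aa (t+1) ≤ 0 := by
      by_contra h; push_neg at h
      exact hodd ⟨fun _ => he, fun _ => hiff'.mp h⟩
    rw [abs_of_pos hp] at hg2
    rw [abs_of_nonpos hn] at hg2'
    have := neg_abs_le (aa (t+1) - aa t)
    linarith
  · have hn : aa t ≤ 0 := by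
      by_contra h; push_neg at h; exact he (hiff.mp h)
    have hp : 0 < aa (t+1) := by
      rcases lt_trichotomy (aa (t+1)) 0 with h | h | h
      · exfalso
        rw [abs_of_neg h] at hg2'
        have he' : Even (t+1) := by
          by_contra hx
          rw [Nat.even_add_one] at hx; push_neg at hx; exact he hx
        have := hiff'.mpr he'
        linarith
      · rw [h, abs_zero] at hg2'; linarith
      · exact h
    rw [abs_of_nonpos hn] at hg2
    rw [abs_of_pos hp] at hg2'
    have := le_abs_self (aa (t+1) - aa t)
    linarith

end BlurAux

theorem stmt_5 :
    ∃ (x : ℕ → Fin 3 → ℝ) (f : ℝ → ℝ) (w : ℕ → ℝ → ℝ) (δ : Fin 3 → ℝ),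
      (∀ i, 0 < δ i ∧ δ i < 1 / 4) ∧
      x 0 0 = δ 0 ∧ x 0 1 = 1 / 2 + δ 1 ∧ x 0 2 = -(1 / 2) - δ 2 ∧
      f 0 = 1 ∧ (∀ d : ℝ, 0 < d → d < 1 → f d = 1 / 2) ∧ (∀ d : ℝ, 1 < d → f d = 0) ∧
      (∀ t y, 0 < w t y) ∧
      (∀ t i, x (t + 1) i =
        (∑ k, f |x t k - x t i| * w t (x t k))⁻¹ *
          ∑ j, f |x t j - x t i| * w t (x t j) * x t j) ∧
      (∃ ε > 0, ∀ t, ε ≤ |x t 0| ∧ (0 < x t 0 ↔ Even t)) ∧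
      ¬ ∃ l : ℝ, Tendsto (fun t => x t 0) atTop (nhds l) := by
  refine ⟨xx, ff, ww, ![1/8, 1/8, 1/8], ?_, ?_, ?_, ?_, ?_, ?_, ?_, ww_pos, update, ?_, ?_⟩
  · intro i; fin_cases i <;> norm_num
  · show aa 0 = _; norm_num [aa]
  · show bb 0 = _; norm_num [bb, bet]
  · show -(bb 0) = _; norm_num [bb, bet, Matrix.cons_val_two, Matrix.tail_cons, Matrix.head_cons]
  · simp [ff]
  · intro d h1 h2; exact ff_mid h1 h2
  · intro d h; exact ff_big h
  · refine ⟨1/24, by norm_num, fun t => ?_⟩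
    have h := aa_key t
    exact ⟨aa_abs_ge t, h.2.2⟩
  · rintro ⟨l, hl⟩
    have hl' : Tendsto (fun t => aa t) atTop (nhds l) := hl
    have h1 : Tendsto (fun t => aa (t+1)) atTop (nhds l) :=
      hl'.comp (tendsto_add_atTop_nat 1)
    have h2 : Tendsto (fun t => aa (t+1) - aa t) atTop (nhds 0) := by
      have := h1.sub hl'
      rwa [sub_self] at this
    obtain ⟨N, hN⟩ := Metric.tendsto_atTop.mp h2 (1/12) (by norm_num)
    have := hN N le_rfl
    rw [Real.dist_eq, sub_zero] at this
    exact absurd this (not_lt.mpr (gap N))
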